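/- Let H: ℝ → Matₙ(ℝ) be continuous with H(t) symmetric, H(t) ⪰ ξI, ξ > 0, and let y, y' solve y' = −H(t)(y − y_d) and (y')' = −H(t)(y' − y_d) + d(t) respectively, where ‖d(t)‖ ≤ δ for all t. Then limsup_{t→∞} ‖y(t) − y'(t)‖ ≤ δ/ξ. -/

import Mathlib

set_option maxHeartbeats 800000

open Matrix Filter Real

/-- Input-to-state stability: a bounded disturbance `d(t)` with `‖d(t)‖ ≤ δ` perturbs a
`ξ`-contracting linear time-varying flow by at most `δ/ξ` asymptotically. -/
theorem disturbance_limsup_bound {n : ℕ}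
    (H : ℝ → Matrix (Fin n) (Fin n) ℝ) (hHcont : Continuous H)
    (hHsymm : ∀ t, (H t).IsSymm)
    (ξ : ℝ) (hξ : 0 < ξ)
    (hHlb : ∀ t (v : EuclideanSpace ℝ (Fin n)),
      ξ * ‖v‖ ^ 2 ≤ inner ℝ v (Matrix.toEuclideanLin (H t) v))
    (yd : EuclideanSpace ℝ (Fin n))
    (y z : ℝ → EuclideanSpace ℝ (Fin n))
    (d : ℝ → EuclideanSpace ℝ (Fin n)) (δ : ℝ) (hδ : ∀ t, ‖d t‖ ≤ δ)
    (hy : ∀ t, HasDerivAt y (-(Matrix.toEuclideanLin (H t) (y t - yd))) t)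
    (hz : ∀ t, HasDerivAt z (-(Matrix.toEuclideanLin (H t) (z t - yd)) + d t) t) :
    limsup (fun t => ‖y t - z t‖) atTop ≤ δ / ξ := by
  have hδ0 : 0 ≤ δ := le_trans (norm_nonneg (d 0)) (hδ 0)
  set r : ℝ := δ / ξ with hr
  have hr0 : 0 ≤ r := div_nonneg hδ0 hξ.le
  set e : ℝ → EuclideanSpace ℝ (Fin n) := fun t => y t - z t with he
  -- derivative of the error
  have hde : ∀ t, HasDerivAt e (-(Matrix.toEuclideanLin (H t) (e t)) - d t) t := by
    intro t
    have h := (hy t).sub (hz t)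
    refine h.congr_deriv ?_
    have : Matrix.toEuclideanLin (H t) (e t)
        = Matrix.toEuclideanLin (H t) (y t - yd) - Matrix.toEuclideanLin (H t) (z t - yd) := by
      rw [← map_sub]; congr 1; simp [he]
    rw [this]; abel
  -- the squared norm
  set g : ℝ → ℝ := fun t => (inner ℝ (e t) (e t) : ℝ) with hg
  have hgnorm : ∀ t, g t = ‖e t‖ ^ 2 := fun t => real_inner_self_eq_norm_sq (e t)
  have hdg : ∀ t, HasDerivAt g
      ((inner ℝ (e t) (-(Matrix.toEuclideanLin (H t) (e t)) - d t) : ℝ)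
        + (inner ℝ (-(Matrix.toEuclideanLin (H t) (e t)) - d t) (e t) : ℝ)) t :=
    fun t => HasDerivAt.inner ℝ (hde t) (hde t)
  -- differential inequality g' ≤ -ξ (g - r²)
  have hkey : ∀ t,
      (inner ℝ (e t) (-(Matrix.toEuclideanLin (H t) (e t)) - d t) : ℝ)
        + (inner ℝ (-(Matrix.toEuclideanLin (H t) (e t)) - d t) (e t) : ℝ)
        ≤ -ξ * (g t - r ^ 2) := by
    intro t
    have hsym : (inner ℝ (-(Matrix.toEuclideanLin (H t) (e t)) - d t) (e t) : ℝ)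
        = (inner ℝ (e t) (-(Matrix.toEuclideanLin (H t) (e t)) - d t) : ℝ) :=
      real_inner_comm _ _
    rw [hsym]
    have hsplit : (inner ℝ (e t) (-(Matrix.toEuclideanLin (H t) (e t)) - d t) : ℝ)
        = -(inner ℝ (e t) (Matrix.toEuclideanLin (H t) (e t)) : ℝ) - (inner ℝ (e t) (d t) : ℝ) := by
      rw [inner_sub_right, inner_neg_right]
    rw [hsplit]
    have h1 := hHlb t (e t)
    have h2 : (inner ℝ (e t) (d t) : ℝ) ≥ -(‖e t‖ * δ) := by
      have := abs_real_inner_le_norm (e t) (d t)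
      have hb : ‖e t‖ * ‖d t‖ ≤ ‖e t‖ * δ :=
        mul_le_mul_of_nonneg_left (hδ t) (norm_nonneg _)
      nlinarith [abs_nonneg (inner ℝ (e t) (d t) : ℝ), neg_abs_le (inner ℝ (e t) (d t) : ℝ)]
    have hδr : δ = ξ * r := by rw [hr]; field_simp
    have hn : 0 ≤ ‖e t‖ := norm_nonneg _
    rw [hgnorm t]
    nlinarith [sq_nonneg (‖e t‖ - r)]
  -- exponential comparison: φ t = exp (ξ t) * (g t - r²) is antitone
  set φ : ℝ → ℝ := fun t => Real.exp (ξ * t) * (g t - r ^ 2) with hφ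
  have hdφ : ∀ t, HasDerivAt φ
      (ξ * Real.exp (ξ * t) * (g t - r ^ 2) + Real.exp (ξ * t) *
        ((inner ℝ (e t) (-(Matrix.toEuclideanLin (H t) (e t)) - d t) : ℝ)
          + (inner ℝ (-(Matrix.toEuclideanLin (H t) (e t)) - d t) (e t) : ℝ))) t := by
    intro t
    have h1 : HasDerivAt (fun t => Real.exp (ξ * t)) (ξ * Real.exp (ξ * t)) t := by
      have := (Real.hasDerivAt_exp (ξ * t)).comp t ((hasDerivAt_id t).const_mul ξ)
      simpa [mul_comm, Function.comp_def] using this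
    exact h1.mul ((hdg t).sub_const (r ^ 2))
  have hanti : Antitone φ := by
    apply antitone_of_deriv_nonpos
    · exact fun t => ((hdφ t).differentiableAt)
    · intro t
      rw [(hdφ t).deriv]
      have hk := hkey t
      have hexp : 0 < Real.exp (ξ * t) := Real.exp_pos _
      nlinarith
  -- hence g t - r² ≤ exp (-ξ t) * φ 0 for t ≥ 0
  have hbound : ∀ t, 0 ≤ t → g t - r ^ 2 ≤ Real.exp (-(ξ * t)) * (g 0 - r ^ 2) := by
    intro t ht
    have h : φ t ≤ φ 0 := hanti ht
    simp only [hφ, mul_zero, Real.exp_zero, one_mul] at h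
    have hexp : 0 < Real.exp (ξ * t) := Real.exp_pos _
    rw [Real.exp_neg, inv_mul_eq_div, le_div_iff₀ hexp]
    linarith [h, mul_comm (g t - r ^ 2) (Real.exp (ξ * t))]
  -- eventual bound for each ε > 0
  have hev : ∀ ε : ℝ, 0 < ε → ∀ᶠ t in atTop, ‖e t‖ ≤ r + ε := by
    intro ε hε
    have htend : Tendsto (fun t : ℝ => Real.exp (-(ξ * t)) * (g 0 - r ^ 2)) atTop (nhds 0) := by
      have h0 : Tendsto (fun t : ℝ => ξ * t) atTop atTop :=
        Tendsto.const_mul_atTop hξ tendsto_id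
      have h1 : Tendsto (fun t : ℝ => (Real.exp (ξ * t))⁻¹) atTop (nhds 0) :=
        (Real.tendsto_exp_atTop.comp h0).inv_tendsto_atTop
      have h2 := h1.mul_const (g 0 - r ^ 2)
      rw [zero_mul] at h2
      refine h2.congr (fun t => ?_)
      rw [Real.exp_neg]
    have hε' : 0 < (r + ε) ^ 2 - r ^ 2 := by nlinarith
    have h2 : ∀ᶠ t in atTop, Real.exp (-(ξ * t)) * (g 0 - r ^ 2) < (r + ε) ^ 2 - r ^ 2 :=
      htend.eventually (eventually_lt_nhds hε')
    filter_upwards [h2, eventually_ge_atTop (0 : ℝ)] with t h2t ht0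
    have := hbound t ht0
    have hgt : g t ≤ (r + ε) ^ 2 := by linarith
    rw [hgnorm t] at hgt
    nlinarith [norm_nonneg (e t)]
  -- conclude on the limsup
  have hcb : IsCoboundedUnder (· ≤ ·) atTop (fun t => ‖y t - z t‖) :=
    isCoboundedUnder_le_of_le atTop (x := 0) (fun t => norm_nonneg _)
  have hls : ∀ ε : ℝ, 0 < ε → limsup (fun t => ‖y t - z t‖) atTop ≤ r + ε := by
    intro ε hε
    exact limsup_le_of_le hcb (hev ε hε)
  exact le_of_forall_pos_le_add hls
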